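/- Let G and H be graphs with γ_I(H) = 2, and let v ∈ V(H). If H ≅ K_2 then γ_I(G∘_v H) = n(G) + γ(G); if H ≅ the complement of K_2 (two isolated vertices) then γ_I(G∘_v H) = n(G) + γ_I(G); and if H is isomorphic to neither of these two graphs then γ_I(G∘_v H) = 2·n(G). -/

import Mathlib

open Finset

open scoped Classical

/-- An Italian dominating function on a finite simple graph: values in {0,1,2} and
every vertex with value 0 has neighbour values summing to at least 2. -/
noncomputable def IsIDF {α : Type*} [Fintype α] (G : SimpleGraph α) (f : α → ℕ) : Prop :=
  (∀ u, f u ≤ 2) ∧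
    ∀ u, f u = 0 → 2 ≤ ∑ w ∈ Finset.univ.filter (fun w => G.Adj u w), f w

/-- The Italian domination number γ_I(G). -/
noncomputable def italianNumber {α : Type*} [Fintype α] (G : SimpleGraph α) : ℕ :=
  sInf {n | ∃ f : α → ℕ, IsIDF G f ∧ ∑ u, f u = n}

/-- A γ_I(G)-function: an IDF on G of minimum weight. -/
noncomputable def IsMinIDF {α : Type*} [Fintype α] (G : SimpleGraph α) (f : α → ℕ) : Prop :=
  IsIDF G f ∧ ∑ u, f u = italianNumber G

/-- D is a dominating set of G. -/
def IsDomSet {α : Type*} (G : SimpleGraph α) (D : Set α) : Prop :=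
  ∀ u ∉ D, ∃ w ∈ D, G.Adj u w

/-- The domination number γ(G). -/
noncomputable def dominationNumber {α : Type*} [Fintype α] (G : SimpleGraph α) : ℕ :=
  sInf {n | ∃ D : Finset α, IsDomSet G ↑D ∧ D.card = n}

/-- The degree of a vertex. -/
noncomputable def deg {α : Type*} [Fintype α] (G : SimpleGraph α) (u : α) : ℕ :=
  (Finset.univ.filter (fun w => G.Adj u w)).card

/-- The rooted product G∘_v H: one copy of H for each vertex of G, the root v of the
x-th copy being identified with the vertex x of G. The pair (x, y) is the vertex y of
the x-th copy of H; in particular (x, v) is the vertex x of G. -/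
def rootedProd {α β : Type*} (G : SimpleGraph α) (H : SimpleGraph β) (v : β) :
    SimpleGraph (α × β) where
  Adj p q := (p.1 = q.1 ∧ H.Adj p.2 q.2) ∨ (p.2 = v ∧ q.2 = v ∧ G.Adj p.1 q.1)
  symm := ⟨by
    rintro ⟨x, y⟩ ⟨x', y'⟩ (⟨h1, h2⟩ | ⟨h1, h2, h3⟩)
    · exact Or.inl ⟨h1.symm, h2.symm⟩
    · exact Or.inr ⟨h2, h1, h3.symm⟩⟩
  loopless := ⟨by
    rintro ⟨x, y⟩ (⟨_, h⟩ | ⟨_, _, h⟩)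
    · exact H.loopless.irrefl _ h
    · exact G.loopless.irrefl _ h⟩

/-- The weight ω(f_x) of the restriction of f to the copy H_x. -/
def copyWeight {α β : Type*} [Fintype β] (f : α × β → ℕ) (x : α) : ℕ :=
  ∑ y, f (x, y)

/-- The graph H − {v} obtained from H by deleting the vertex v. -/
def deleteVertex {β : Type*} (H : SimpleGraph β) (v : β) : SimpleGraph {w : β // w ≠ v} :=
  SimpleGraph.induce {w : β | w ≠ v} H

section Helpers
variable {α β : Type*} [Fintype α] [Fintype β]

lemma isIDF_const2 (G : SimpleGraph α) : IsIDF G (fun _ => 2) :=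
  ⟨fun _ => le_refl 2, fun _ h => by simp at h⟩

lemma isIDF_const1 (G : SimpleGraph α) : IsIDF G (fun _ => 1) :=
  ⟨fun _ => one_le_two, fun _ h => by simp at h⟩

lemma italian_nonempty (G : SimpleGraph α) :
    {n | ∃ f : α → ℕ, IsIDF G f ∧ ∑ u, f u = n}.Nonempty :=
  ⟨_, fun _ => 2, isIDF_const2 G, rfl⟩

lemma italian_mem (G : SimpleGraph α) :
    ∃ f : α → ℕ, IsIDF G f ∧ ∑ u, f u = italianNumber G :=
  Nat.sInf_mem (italian_nonempty G)

lemma italian_le (G : SimpleGraph α) {f : α → ℕ} (h : IsIDF G f) :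
    italianNumber G ≤ ∑ u, f u :=
  Nat.sInf_le ⟨f, h, rfl⟩

lemma italian_le_card (G : SimpleGraph α) : italianNumber G ≤ Fintype.card α := by
  simpa using italian_le G (isIDF_const1 G)

lemma dom_mem (G : SimpleGraph α) :
    ∃ D : Finset α, IsDomSet G ↑D ∧ D.card = dominationNumber G := by
  have h : IsDomSet G ↑(univ : Finset α) := fun u hu => absurd (by simp) hu
  have hm : Fintype.card α ∈ {n | ∃ D : Finset α, IsDomSet G ↑D ∧ D.card = n} :=
    ⟨univ, h, by simp⟩
  exact Nat.sInf_mem ⟨_, hm⟩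

lemma dom_le (G : SimpleGraph α) {D : Finset α} (h : IsDomSet G ↑D) :
    dominationNumber G ≤ D.card :=
  Nat.sInf_le ⟨D, h, rfl⟩

lemma weight_eq_sum_copy (f : α × β → ℕ) :
    ∑ p, f p = ∑ x, copyWeight f x := by
  rw [Fintype.sum_prod_type]; rfl

variable {G : SimpleGraph α} {H : SimpleGraph β} {v : β}

lemma rp_adj (p q : α × β) : (rootedProd G H v).Adj p q ↔
    (p.1 = q.1 ∧ H.Adj p.2 q.2) ∨ (p.2 = v ∧ q.2 = v ∧ G.Adj p.1 q.1) := Iff.rfl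

lemma nbr_sum_ne (f : α × β → ℕ) (x : α) {y : β} (hy : y ≠ v) :
    ∑ p ∈ univ.filter (fun p => (rootedProd G H v).Adj (x, y) p), f p
      = ∑ y' ∈ univ.filter (fun y' => H.Adj y y'), f (x, y') := by
  rw [sum_filter, sum_filter, Fintype.sum_prod_type]
  rw [Finset.sum_eq_single x]
  · refine Finset.sum_congr rfl fun y' _ => ?_
    by_cases h : H.Adj y y' <;> simp [rp_adj, h, hy]
  · intro x' _ hx'
    apply Finset.sum_eq_zero
    intro y' _
    rw [if_neg]
    rintro (⟨h1, _⟩ | ⟨h1, _, _⟩)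
    · exact hx' h1.symm
    · exact hy h1
  · simp

lemma nbr_sum_v (f : α × β → ℕ) (x : α) :
    ∑ p ∈ univ.filter (fun p => (rootedProd G H v).Adj (x, v) p), f p
      = (∑ y' ∈ univ.filter (fun y' => H.Adj v y'), f (x, y'))
        + ∑ x' ∈ univ.filter (fun x' => G.Adj x x'), f (x', v) := by
  rw [sum_filter, sum_filter, sum_filter, Fintype.sum_prod_type]
  have key : ∀ x' : α, ∀ y' : β,
      (if (rootedProd G H v).Adj (x, v) (x', y') then f (x', y') else 0)
        = (if x' = x ∧ H.Adj v y' then f (x', y') else 0)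
          + (if y' = v ∧ G.Adj x x' then f (x', y') else 0) := by
    intro x' y'
    simp only [rp_adj]
    by_cases e1 : x' = x <;> by_cases e2 : H.Adj v y' <;> by_cases e3 : y' = v <;>
      by_cases e4 : G.Adj x x' <;>
      simp_all [SimpleGraph.irrefl] <;> exact fun h => absurd h.symm e1
  calc ∑ x', ∑ y', (if (rootedProd G H v).Adj (x, v) (x', y') then f (x', y') else 0)
      = ∑ x', ∑ y', ((if x' = x ∧ H.Adj v y' then f (x', y') else 0)
          + (if y' = v ∧ G.Adj x x' then f (x', y') else 0)) := by
        exact Finset.sum_congr rfl fun x' _ => Finset.sum_congr rfl fun y' _ => key x' y'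
    _ = (∑ x', ∑ y', (if x' = x ∧ H.Adj v y' then f (x', y') else 0))
          + ∑ x', ∑ y', (if y' = v ∧ G.Adj x x' then f (x', y') else 0) := by
        rw [← Finset.sum_add_distrib]
        exact Finset.sum_congr rfl fun x' _ => Finset.sum_add_distrib
    _ = (∑ y', if H.Adj v y' then f (x, y') else 0)
          + ∑ x', if G.Adj x x' then f (x', v) else 0 := by
        congr 1
        · rw [Finset.sum_eq_single x]
          · exact Finset.sum_congr rfl fun y' _ => by simp
          · intro x' _ hx'
            exact Finset.sum_eq_zero fun y' _ => if_neg (fun h => hx' h.1)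
          · simp
        · exact Finset.sum_congr rfl fun x' _ => by
            rw [Finset.sum_eq_single v]
            · simp
            · intro y' _ hy'
              exact if_neg (fun h => hy' h.1)
            · simp
end Helpers

section Cases
variable {α β : Type*} [Fintype α] [Fintype β] {G : SimpleGraph α} {H : SimpleGraph β} {v : β}

lemma fin2_facts : ∀ i j : Fin 2, (i = j ∨ i = j + 1) ∧ j + 1 ≠ j := by decide

lemma other_vertex {K : SimpleGraph (Fin 2)} (e : H ≃g K) (v : β) :
    ∃ w : β, w ≠ v ∧ ∀ y : β, y = v ∨ y = w := by
  refine ⟨e.symm (e v + 1), fun h => ?_, fun y => ?_⟩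
  · have h2 := congrArg e h
    simp only [RelIso.apply_symm_apply] at h2
    exact (fin2_facts (e v) (e v)).2 h2
  · rcases (fin2_facts (e y) (e v)).1 with h | h
    · exact Or.inl (e.toEquiv.injective (by simpa using h))
    · right
      have : e.symm (e y) = e.symm (e v + 1) := by rw [h]
      simpa using this

lemma sum_two {w : β} (hw : w ≠ v) (hall : ∀ y : β, y = v ∨ y = w) (g : β → ℕ) :
    ∑ y, g y = g v + g w := by
  have huniv : (univ : Finset β) = {v, w} := by
    ext y; simpa using hall y
  rw [huniv, Finset.sum_pair (Ne.symm hw)]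

lemma bot_no_adj (e : H ≃g (⊥ : SimpleGraph (Fin 2))) : ∀ a b : β, ¬H.Adj a b :=
  fun a b h => by simpa using e.map_rel_iff.mpr h

lemma top_adj_iff (e : H ≃g (⊤ : SimpleGraph (Fin 2))) : ∀ a b : β, H.Adj a b ↔ a ≠ b := by
  intro a b
  rw [← e.map_rel_iff]
  simp [SimpleGraph.top_adj, e.toEquiv.injective.ne_iff]

end Cases

section Main
variable {α β : Type*} [Fintype α] [Fintype β] {G : SimpleGraph α} {H : SimpleGraph β} {v : β}

lemma case_bot (G : SimpleGraph α) (e : H ≃g (⊥ : SimpleGraph (Fin 2))) (v : β) :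
    italianNumber (rootedProd G H v) = Fintype.card α + italianNumber G := by
  obtain ⟨w, hw, hall⟩ := other_vertex e v
  have hno : ∀ a b : β, ¬H.Adj a b := bot_no_adj e
  have hfilt : ∀ a : β, univ.filter (fun y' => H.Adj a y') = ∅ := by
    intro a; ext y'; simp [hno]
  apply le_antisymm
  · obtain ⟨g, hg, hgw⟩ := italian_mem G
    set f : α × β → ℕ := fun p => if p.2 = v then g p.1 else 1 with hfdef
    have hidf : IsIDF (rootedProd G H v) f := by
      constructor
      · intro p; by_cases h : p.2 = v <;> simp [hfdef, h, hg.1 p.1]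
      · rintro ⟨x, y⟩ hp
        have hpv : y = v := by by_contra h; simp [hfdef, h] at hp
        have hg0 : g x = 0 := by simpa [hfdef, hpv] using hp
        rw [hpv, nbr_sum_v f x, hfilt v, Finset.sum_empty, zero_add]
        calc 2 ≤ ∑ x' ∈ univ.filter (fun x' => G.Adj x x'), g x' := hg.2 x hg0
          _ = ∑ x' ∈ univ.filter (fun x' => G.Adj x x'), f (x', v) := by
              exact Finset.sum_congr rfl fun x' _ => by simp [hfdef]
    have hcw : ∀ x : α, copyWeight f x = g x + 1 := by
      intro x
      unfold copyWeight
      rw [sum_two hw hall (fun y => f (x, y))]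
      simp [hfdef, hw]
    calc italianNumber (rootedProd G H v) ≤ ∑ p, f p := italian_le _ hidf
      _ = ∑ x, copyWeight f x := weight_eq_sum_copy f
      _ = ∑ x, (g x + 1) := Finset.sum_congr rfl fun x _ => hcw x
      _ = Fintype.card α + italianNumber G := by
          rw [Finset.sum_add_distrib, hgw]; simp [add_comm]
  · obtain ⟨f, hf, hfw⟩ := italian_mem (rootedProd G H v)
    rw [← hfw, weight_eq_sum_copy]
    have h1 : ∀ x : α, 1 ≤ f (x, w) := by
      intro x
      by_contra h
      have h0 : f (x, w) = 0 := by omega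
      have h2 := hf.2 (x, w) h0
      rw [nbr_sum_ne f x hw, hfilt w, Finset.sum_empty] at h2
      omega
    have hidfg : IsIDF G (fun x => f (x, v)) := by
      refine ⟨fun x => hf.1 (x, v), fun x h0 => ?_⟩
      have h2 := hf.2 (x, v) h0
      rw [nbr_sum_v f x, hfilt v, Finset.sum_empty, zero_add] at h2
      exact h2
    calc Fintype.card α + italianNumber G
        ≤ Fintype.card α + ∑ x, f (x, v) :=
          Nat.add_le_add le_rfl (italian_le G hidfg)
      _ = ∑ x : α, (f (x, v) + 1) := by rw [Finset.sum_add_distrib]; simp [add_comm]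
      _ ≤ ∑ x, copyWeight f x := by
          refine Finset.sum_le_sum fun x _ => ?_
          unfold copyWeight
          rw [sum_two hw hall (fun y => f (x, y))]
          exact Nat.add_le_add le_rfl (h1 x)

lemma case_top (G : SimpleGraph α) (e : H ≃g (⊤ : SimpleGraph (Fin 2))) (v : β) :
    italianNumber (rootedProd G H v) = Fintype.card α + dominationNumber G := by
  obtain ⟨w, hw, hall⟩ := other_vertex e v
  have hadj : ∀ a b : β, H.Adj a b ↔ a ≠ b := top_adj_iff e
  have hfv : univ.filter (fun y' => H.Adj v y') = {w} := by
    ext y'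
    simp only [mem_filter, mem_univ, true_and, mem_singleton, hadj]
    constructor
    · intro h; rcases hall y' with h1 | h1
      · exact absurd h1.symm h
      · exact h1
    · intro h; rw [h]; exact fun hc => hw hc.symm
  have hfw : univ.filter (fun y' => H.Adj w y') = {v} := by
    ext y'
    simp only [mem_filter, mem_univ, true_and, mem_singleton, hadj]
    constructor
    · intro h; rcases hall y' with h1 | h1
      · exact h1
      · exact absurd h1 h.symm
    · intro h; rw [h]; exact fun hc => hw hc
  apply le_antisymm
  · obtain ⟨D, hD, hDcard⟩ := dom_mem G
    set f : α × β → ℕ := fun p => if p.2 = v then (if p.1 ∈ D then 1 else 0) else 1 with hfdef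
    have hidf : IsIDF (rootedProd G H v) f := by
      constructor
      · intro p
        by_cases h : p.2 = v
        · by_cases h' : p.1 ∈ D <;> simp [hfdef, h, h'] <;> omega
        · simp [hfdef, h]
      · rintro ⟨x, y⟩ hp
        have hpv : y = v := by by_contra h; simp [hfdef, h] at hp
        have hxD : x ∉ D := by
          intro h; rw [hpv] at hp; simp [hfdef, h] at hp
        obtain ⟨x', hx'D, hx'adj⟩ := hD x hxD
        rw [hpv, nbr_sum_v f x, hfv, Finset.sum_singleton]
        have hxw : f (x, w) = 1 := by simp [hfdef, hw]
        have hmem : x' ∈ univ.filter (fun x' => G.Adj x x') := by simp [hx'adj]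
        have hle : f (x', v) ≤ ∑ x'' ∈ univ.filter (fun x'' => G.Adj x x''), f (x'', v) :=
          Finset.single_le_sum (f := fun x'' => f (x'', v)) (fun i _ => Nat.zero_le _) hmem
        have : f (x', v) = 1 := by simp [hfdef, Finset.mem_coe.mp hx'D]
        omega
    have hcw : ∀ x : α, copyWeight f x = (if x ∈ D then 1 else 0) + 1 := by
      intro x
      unfold copyWeight
      rw [sum_two hw hall (fun y => f (x, y))]
      simp [hfdef, hw]
    calc italianNumber (rootedProd G H v) ≤ ∑ p, f p := italian_le _ hidf
      _ = ∑ x, copyWeight f x := weight_eq_sum_copy f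
      _ = ∑ x, ((if x ∈ D then 1 else 0) + 1) := Finset.sum_congr rfl fun x _ => hcw x
      _ = Fintype.card α + dominationNumber G := by
          rw [Finset.sum_add_distrib, Finset.sum_ite_mem]
          simp [hDcard, add_comm]
  · obtain ⟨f, hf, hfw2⟩ := italian_mem (rootedProd G H v)
    rw [← hfw2, weight_eq_sum_copy]
    set c : α → ℕ := fun x => f (x, v) + f (x, w) with hcdef
    have hcw : ∀ x : α, copyWeight f x = c x := by
      intro x; unfold copyWeight; rw [sum_two hw hall (fun y => f (x, y))]
    have hA : ∀ x : α, f (x, w) = 0 → f (x, v) = 2 := by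
      intro x h0
      have h2 := hf.2 (x, w) h0
      rw [nbr_sum_ne f x hw, hfw, Finset.sum_singleton] at h2
      have := hf.1 (x, v)
      omega
    have hB : ∀ x : α, x ∉ univ.filter (fun x => 2 ≤ c x) → 2 ≤ c x → False := by
      intro x hx h; exact hx (by simpa using h)
    set D : Finset α := univ.filter (fun x => 2 ≤ c x) with hDdef
    have hmemD : ∀ x : α, x ∈ D ↔ 2 ≤ c x := by intro x; simp [hDdef]
    have hDdom : IsDomSet G ↑D := by
      intro x hx
      have hxc : c x ≤ 1 := by
        by_contra h
        exact hx (by simp [hDdef]; omega)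
      have hxw1 : f (x, w) = 1 := by
        rcases Nat.eq_zero_or_pos (f (x, w)) with h | h
        · have := hA x h; simp [hcdef] at hxc; omega
        · simp [hcdef] at hxc; omega
      have hxv0 : f (x, v) = 0 := by simp [hcdef] at hxc; omega
      have h2 := hf.2 (x, v) hxv0
      rw [nbr_sum_v f x, hfv, Finset.sum_singleton, hxw1] at h2
      have hex : ∃ x' ∈ univ.filter (fun x' => G.Adj x x'), 1 ≤ f (x', v) := by
        by_contra hc
        push_neg at hc
        have : ∑ x' ∈ univ.filter (fun x' => G.Adj x x'), f (x', v) = 0 :=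
          Finset.sum_eq_zero fun x' hx' => by have := hc x' hx'; omega
        omega
      obtain ⟨x', hx'mem, hx'1⟩ := hex
      refine ⟨x', ?_, (Finset.mem_filter.mp hx'mem).2⟩
      have hx'D : 2 ≤ c x' := by
        rcases Nat.eq_zero_or_pos (f (x', w)) with h | h
        · have := hA x' h; simp [hcdef]; omega
        · simp [hcdef]; omega
      simpa using (hmemD x').mpr hx'D
    calc Fintype.card α + dominationNumber G
        ≤ Fintype.card α + D.card := Nat.add_le_add le_rfl (dom_le G hDdom)
      _ = ∑ x : α, (1 + if x ∈ D then 1 else 0) := by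
          rw [Finset.sum_add_distrib, Finset.sum_ite_mem]
          simp
      _ ≤ ∑ x, c x := by
          refine Finset.sum_le_sum fun x _ => ?_
          by_cases h : x ∈ D
          · simp only [h, if_pos]; have := (hmemD x).mp h; omega
          · simp only [h, if_neg, if_false]
            have h1 : 1 ≤ c x := by
              by_contra hc
              have hc0 : c x = 0 := by omega
              have hw0 : f (x, w) = 0 := by simp [hcdef] at hc0; omega
              have := hA x hw0
              simp [hcdef] at hc0; omega
            omega
      _ = ∑ x, copyWeight f x := Finset.sum_congr rfl fun x _ => (hcw x).symm


lemma two_card_iso (H : SimpleGraph β) (hcard : Fintype.card β = 2) :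
    Nonempty (H ≃g (⊤ : SimpleGraph (Fin 2))) ∨ Nonempty (H ≃g (⊥ : SimpleGraph (Fin 2))) := by
  classical
  have q : β ≃ Fin 2 := Fintype.equivFinOfCardEq hcard
  by_cases hedge : ∃ a b : β, H.Adj a b
  · left
    obtain ⟨a, b, hab⟩ := hedge
    have hne : a ≠ b := hab.ne
    have huniv : (univ : Finset β) = {a, b} :=
      (Finset.eq_univ_of_card _ (by rw [Finset.card_pair hne, hcard])).symm
    have hall : ∀ x : β, x = a ∨ x = b := by
      intro x
      have : x ∈ ({a, b} : Finset β) := huniv ▸ Finset.mem_univ x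
      simpa using this
    have hiff : ∀ x y : β, H.Adj x y ↔ x ≠ y := by
      intro x y
      constructor
      · exact fun h => h.ne
      · intro hxy
        rcases hall x with h1 | h1 <;> rcases hall y with h2 | h2 <;> subst h1 <;> subst h2
        · exact absurd rfl hxy
        · exact hab
        · exact hab.symm
        · exact absurd rfl hxy
    exact ⟨⟨q, by intro x y; simp [SimpleGraph.top_adj, q.injective.ne_iff, hiff]⟩⟩
  · right
    push_neg at hedge
    exact ⟨⟨q, by intro x y; simp [hedge x y]⟩⟩

lemma case_other (G : SimpleGraph α) (H : SimpleGraph β) (v : β)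
    (h2 : italianNumber H = 2)
    (hT : ¬ Nonempty (H ≃g (⊤ : SimpleGraph (Fin 2))))
    (hB : ¬ Nonempty (H ≃g (⊥ : SimpleGraph (Fin 2)))) :
    italianNumber (rootedProd G H v) = 2 * Fintype.card α := by
  have hne : Nonempty β := ⟨v⟩
  have hcard3 : 3 ≤ Fintype.card β := by
    rcases Nat.lt_or_ge (Fintype.card β) 3 with h | h
    · exfalso
      interval_cases hc : Fintype.card β
      · exact absurd hc Fintype.card_ne_zero
      · have := italian_le_card H
        omega
      · rcases two_card_iso H hc with h' | h'
        · exact hT h'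
        · exact hB h'
    · exact h
  apply le_antisymm
  · obtain ⟨h, hh, hhw⟩ := italian_mem H
    rw [h2] at hhw
    set f : α × β → ℕ := fun p => h p.2 with hfdef
    have hidf : IsIDF (rootedProd G H v) f := by
      constructor
      · intro p; exact hh.1 p.2
      · rintro ⟨x, y⟩ hp
        have h0 : h y = 0 := hp
        have hsum := hh.2 y h0
        have hsum' : 2 ≤ ∑ y' ∈ univ.filter (fun y' => H.Adj y y'), f (x, y') := by
          calc 2 ≤ ∑ y' ∈ univ.filter (fun y' => H.Adj y y'), h y' := hsum
            _ = _ := Finset.sum_congr rfl fun y' _ => rfl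
        by_cases hy : y = v
        · rw [hy, nbr_sum_v f x]
          rw [hy] at hsum'
          omega
        · rw [nbr_sum_ne f x hy]
          exact hsum'
    calc italianNumber (rootedProd G H v) ≤ ∑ p, f p := italian_le _ hidf
      _ = ∑ x : α, ∑ y : β, h y := by rw [Fintype.sum_prod_type]
      _ = 2 * Fintype.card α := by rw [hhw]; simp [mul_comm]
  · obtain ⟨f, hf, hfw⟩ := italian_mem (rootedProd G H v)
    rw [← hfw, weight_eq_sum_copy]
    have hcw : ∀ x : α, 2 ≤ copyWeight f x := by
      intro x
      by_contra hc
      push_neg at hc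
      have hcw1 : copyWeight f x ≤ 1 := by omega
      have hpos : ∀ y : β, y ≠ v → 1 ≤ f (x, y) := by
        intro y hy
        by_contra h
        have h0 : f (x, y) = 0 := by omega
        have h2' := hf.2 (x, y) h0
        rw [nbr_sum_ne f x hy] at h2'
        have hle : ∑ y' ∈ univ.filter (fun y' => H.Adj y y'), f (x, y') ≤ copyWeight f x :=
          Finset.sum_le_sum_of_subset (Finset.filter_subset _ _)
        omega
      have hge : (Fintype.card β - 1 : ℕ) ≤ copyWeight f x := by
        calc (Fintype.card β - 1 : ℕ)
            = (univ.filter (fun y : β => y ≠ v)).card := by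
              rw [Finset.filter_ne', Finset.card_erase_of_mem (Finset.mem_univ v)]
              simp
          _ = ∑ y ∈ univ.filter (fun y : β => y ≠ v), 1 := by simp
          _ ≤ ∑ y ∈ univ.filter (fun y : β => y ≠ v), f (x, y) :=
              Finset.sum_le_sum fun y hy => hpos y (Finset.mem_filter.mp hy).2
          _ ≤ copyWeight f x :=
              Finset.sum_le_sum_of_subset (Finset.filter_subset _ _)
      omega
    calc 2 * Fintype.card α = ∑ _x : α, 2 := by simp [mul_comm]
      _ ≤ ∑ x, copyWeight f x := Finset.sum_le_sum fun x _ => hcw x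

end Main

/-- Theorem, the case γ_I(H) = 2: if γ_I(H) = 2 then
γ_I(G∘_v H) = n(G)+γ(G) if H ≅ K_2, γ_I(G∘_v H) = n(G)+γ_I(G) if H ≅ complement of K_2,
and γ_I(G∘_v H) = 2n(G) otherwise. -/
theorem stmt9 {α β : Type*} [Fintype α] [Nonempty α] [Fintype β]
    (G : SimpleGraph α) (H : SimpleGraph β) (v : β) (h2 : italianNumber H = 2) :
    (Nonempty (H ≃g (⊤ : SimpleGraph (Fin 2))) →
      italianNumber (rootedProd G H v) = Fintype.card α + dominationNumber G) ∧
    (Nonempty (H ≃g (⊥ : SimpleGraph (Fin 2))) →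
      italianNumber (rootedProd G H v) = Fintype.card α + italianNumber G) ∧
    (¬ Nonempty (H ≃g (⊤ : SimpleGraph (Fin 2))) →
      ¬ Nonempty (H ≃g (⊥ : SimpleGraph (Fin 2))) →
      italianNumber (rootedProd G H v) = 2 * Fintype.card α) := by
  refine ⟨fun ⟨e⟩ => case_top G e v, fun ⟨e⟩ => case_bot G e v,
    fun hT hB => case_other G H v h2 hT hB⟩
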